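/- Let n be a positive real number and ε a nonzero real constant. Define C = (-8ε(n+1)(n+2)(n+4)(3n+4))^(1/n) (assuming the argument of the n-th root is positive) and u(t,x) = C·(n x)^(-4/n) for x > 0. Then u satisfies the fifth-order KdV equation u_t + u^n u_x + ε u_{xxxxx} = 0 on the domain x > 0. -/

import Mathlib

/-- Iterated derivatives of `y ↦ c * (n*y)^p` on `x > 0`. -/
lemma kdv_aux (n p c : ℝ) (hn : 0 < n) : ∀ (k : ℕ) (x : ℝ), 0 < x →
    iteratedDeriv k (fun y => c * (n * y) ^ p) x
      = c * (∏ i ∈ Finset.range k, (p - i)) * n ^ k * (n * x) ^ (p - k) := by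
  intro k
  induction k with
  | zero => intro x hx; simp
  | succ k ih =>
    intro x hx
    rw [iteratedDeriv_succ]
    have hev : iteratedDeriv k (fun y => c * (n * y) ^ p)
        =ᶠ[nhds x] fun y => c * (∏ i ∈ Finset.range k, (p - i)) * n ^ k * (n * y) ^ (p - k) :=
      Filter.eventuallyEq_of_mem (isOpen_Ioi.mem_nhds hx) (fun y hy => ih y hy)
    rw [hev.deriv_eq]
    have hnx : n * x ≠ 0 := (mul_pos hn hx).ne'
    have h1 : HasDerivAt (fun y : ℝ => (n * y) ^ (p - (k : ℝ)))
        ((p - k) * (n * x) ^ (p - (k : ℝ) - 1) * n) x := by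
      have := (Real.hasDerivAt_rpow_const (p := p - (k : ℝ)) (Or.inl hnx)).comp x
        ((hasDerivAt_id x).const_mul n)
      simpa [mul_comm, mul_assoc, Function.comp_def] using this
    rw [(h1.const_mul (c * (∏ i ∈ Finset.range k, (p - i)) * n ^ k)).deriv]
    have hexp : p - ((k : ℝ) + 1) = p - (k : ℝ) - 1 := by ring
    rw [Finset.prod_range_succ]
    push_cast
    rw [hexp]
    ring

/-- Stationary solution of the constant-coefficient fifth-order KdV equation
    `u_t + u^n u_x + ε u_{xxxxx} = 0` on the domain `x > 0`. -/
theorem stmt_0 (n ε : ℝ) (hn : 0 < n) (hε : ε ≠ 0)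
    (hpos : 0 < -8 * ε * (n + 1) * (n + 2) * (n + 4) * (3 * n + 4))
    (u : ℝ → ℝ → ℝ)
    (hu : ∀ t x : ℝ, u t x =
      (-8 * ε * (n + 1) * (n + 2) * (n + 4) * (3 * n + 4)) ^ (1 / n) * (n * x) ^ (-4 / n)) :
    ∀ t x : ℝ, 0 < x →
      deriv (fun s => u s x) t + (u t x) ^ n * deriv (fun y => u t y) x
        + ε * iteratedDeriv 5 (fun y => u t y) x = 0 := by
  intro t x hx
  set A : ℝ := -8 * ε * (n + 1) * (n + 2) * (n + 4) * (3 * n + 4) with hA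
  set C : ℝ := A ^ (1 / n) with hC
  set p : ℝ := -4 / n with hp
  have hnx : (0 : ℝ) < n * x := mul_pos hn hx
  have hCpos : 0 < C := Real.rpow_pos_of_pos hpos _
  have hfun : (fun y => u t y) = fun y => C * (n * y) ^ p := funext fun y => hu t y
  have htfun : (fun s => u s x) = fun _ => C * (n * x) ^ p := funext fun s => hu s x
  rw [hfun, htfun, deriv_const, hu t x]
  have h1 := kdv_aux n p C hn 1 x hx
  have h5 := kdv_aux n p C hn 5 x hx
  rw [iteratedDeriv_one] at h1
  rw [h1, h5]
  simp only [Finset.prod_range_succ, Finset.prod_range_zero]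
  push_cast
  have hCn : C ^ n = A := by
    rw [hC, ← Real.rpow_mul hpos.le, one_div_mul_cancel hn.ne', Real.rpow_one]
  have hupow : (C * (n * x) ^ p) ^ n = A * (n * x) ^ (-4 : ℝ) := by
    rw [Real.mul_rpow hCpos.le (Real.rpow_nonneg hnx.le _), hCn,
      ← Real.rpow_mul hnx.le, show p * n = -4 by rw [hp]; field_simp]
  rw [hupow]
  have hmul : (n * x) ^ (-4 : ℝ) * (n * x) ^ (p - 1) = (n * x) ^ (p - 5) := by
    rw [← Real.rpow_add hnx]
    ring_nf
  have key : A * p * n + ε * (p * (p - 1) * (p - 2) * (p - 3) * (p - 4)) * n ^ 5 = 0 := by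
    rw [hp, hA]
    field_simp
    ring
  linear_combination (C * (n * x) ^ (p - 5)) * key + A * C * p * n * hmul
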